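/- Fix g ≥ 2 and let γ = 1/(4 log g). For all sufficiently large k, the sum over pairs (n, m) with 1 ≤ m ≤ n ≤ k and m ≤ k - γ log k of |P_n| · |P_m| is at most 16 · g^{k + 1 - (γ/2) log k}. -/

import Mathlib

/-- The finite set of base-`g` palindromes with exactly `n` digits. -/
def palFinset (g n : ℕ) : Finset ℕ :=
  (Finset.range (g ^ n)).filter
    (fun m => (Nat.digits g m).length = n ∧ (Nat.digits g m).reverse = Nat.digits g m)

/-- A palindrome is determined by its top half of digits. -/
lemma card_palFinset_le (g : ℕ) (hg : 2 ≤ g) (n : ℕ) :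
    (palFinset g n).card ≤ g ^ ((n + 1) / 2) := by
  classical
  have hg1 : 1 < g := hg
  calc (palFinset g n).card
      ≤ (Finset.range (g ^ ((n + 1) / 2))).card := by
        apply Finset.card_le_card_of_injOn
          (fun a => Nat.ofDigits g ((Nat.digits g a).drop (n / 2)))
        · intro a ha
          simp only [palFinset, Finset.mem_coe, Finset.mem_filter, Finset.mem_range] at ha
          obtain ⟨-, hlen, -⟩ := ha
          rw [Finset.mem_coe, Finset.mem_range]
          have h1 : Nat.ofDigits g ((Nat.digits g a).drop (n / 2)) <
              g ^ ((Nat.digits g a).drop (n / 2)).length :=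
            Nat.ofDigits_lt_base_pow_length hg1
              (fun x hx => Nat.digits_lt_base hg1 (List.mem_of_mem_drop hx))
          rwa [List.length_drop, hlen, (by omega : n - n / 2 = (n + 1) / 2)] at h1
        · intro a ha b hb hab
          simp only [palFinset, Finset.coe_filter, Set.mem_setOf_eq, Finset.mem_coe,
            Finset.mem_range] at ha hb
          obtain ⟨-, hal, har⟩ := ha
          obtain ⟨-, hbl, hbr⟩ := hb
          simp only at hab
          -- digits of both sides
          have hdig : ∀ c : ℕ, (Nat.digits g c).length = n →
              Nat.digits g (Nat.ofDigits g ((Nat.digits g c).drop (n / 2)))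
                = (Nat.digits g c).drop (n / 2) := by
            intro c hcl
            apply Nat.digits_ofDigits g hg1
            · exact fun x hx => Nat.digits_lt_base hg1 (List.mem_of_mem_drop hx)
            · intro hne
              rw [List.getLast_drop]
              have hc0 : c ≠ 0 := by
                intro h0
                subst h0
                simp at hne
              exact Nat.getLast_digit_ne_zero g hc0
          have hdrop : (Nat.digits g a).drop (n / 2) = (Nat.digits g b).drop (n / 2) := by
            rw [← hdig a hal, ← hdig b hbl, hab]
          -- reconstruct the full digit list from its top part
          have key : ∀ l : List ℕ, l.length = n → l.reverse = l →
              l = (List.drop ((n - n / 2) - n / 2) (l.drop (n / 2))).reverse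
                    ++ l.drop (n / 2) := by
            intro l hl hr
            rw [List.drop_drop, (by omega : n / 2 + (n - n / 2 - n / 2) = n - n / 2)]
            conv_lhs => rw [← List.take_append_drop (n / 2) l]
            congr 1
            have h2 : List.take (n / 2) l.reverse
                = (List.drop (l.length - n / 2) l).reverse := List.take_reverse
            rw [hr] at h2
            rw [h2, hl]
          have hla : Nat.digits g a = Nat.digits g b := by
            rw [key _ hal har, key _ hbl hbr, hdrop]
          have := congrArg (Nat.ofDigits g) hla
          rwa [Nat.ofDigits_digits, Nat.ofDigits_digits] at this
    _ = g ^ ((n + 1) / 2) := Finset.card_range _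

lemma geomSum_le (g : ℕ) (hg : 2 ≤ g) :
    ∀ N : ℕ, ∑ n ∈ Finset.Icc 1 N, g ^ ((n + 1) / 2) ≤ 4 * g ^ ((N + 1) / 2)
  | 0 => by simp
  | 1 => by
      norm_num [Finset.Icc_self]
      omega
  | (N + 2) => by
      have ih := geomSum_le g hg N
      rw [Finset.sum_Icc_succ_top (by omega), Finset.sum_Icc_succ_top (by omega)]
      have h2 : (N + 2 + 1) / 2 = (N + 1) / 2 + 1 := by omega
      have e1 : g ^ ((N + 1 + 1) / 2) ≤ g ^ ((N + 1) / 2 + 1) :=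
        Nat.pow_le_pow_right (by omega) (by omega)
      rw [h2]
      have e3 : 4 * g ^ ((N + 1) / 2) + 2 * g ^ ((N + 1) / 2 + 1)
          ≤ 4 * g ^ ((N + 1) / 2 + 1) := by
        rw [pow_succ]
        nlinarith [Nat.zero_le (g ^ ((N + 1) / 2))]
      calc (∑ n ∈ Finset.Icc 1 N, g ^ ((n + 1) / 2)) + g ^ ((N + 1 + 1) / 2)
            + g ^ ((N + 1) / 2 + 1)
          ≤ 4 * g ^ ((N + 1) / 2) + g ^ ((N + 1) / 2 + 1) + g ^ ((N + 1) / 2 + 1) := by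
            gcongr <;> omega
        _ = 4 * g ^ ((N + 1) / 2) + 2 * g ^ ((N + 1) / 2 + 1) := by ring
        _ ≤ 4 * g ^ ((N + 1) / 2 + 1) := e3

theorem stmt_11 (g : ℕ) (hg : 2 ≤ g) :
    let γ : ℝ := 1 / (4 * Real.log g)
    ∃ K : ℕ, ∀ k : ℕ, K ≤ k →
      ∑ nm ∈ (Finset.Icc 1 k ×ˢ Finset.Icc 1 k).filter
          (fun nm : ℕ × ℕ => nm.2 ≤ nm.1 ∧ (nm.2 : ℝ) ≤ k - γ * Real.log k),
          ((palFinset g nm.1).card : ℝ) * ((palFinset g nm.2).card : ℝ)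
        ≤ 16 * (g : ℝ) ^ ((k : ℝ) + 1 - (γ / 2) * Real.log k) := by
  intro γ
  have hγdef : γ = 1 / (4 * Real.log g) := rfl
  have hgR : (1 : ℝ) < (g : ℝ) := by exact_mod_cast Nat.lt_of_lt_of_le one_lt_two hg
  have hlog2 : (1 : ℝ) / 2 < Real.log 2 := by
    have := Real.log_two_gt_d9; linarith
  have hlogg : Real.log 2 ≤ Real.log g :=
    Real.log_le_log (by norm_num) (by exact_mod_cast hg)
  have hlg : 0 < Real.log g := by linarith
  have hγpos : 0 < γ := by
    rw [hγdef]
    exact one_div_pos.mpr (by linarith)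
  have hγle : γ ≤ 1 / 2 := by
    rw [hγdef]
    rw [div_le_div_iff₀ (by linarith) (by norm_num)]
    linarith
  refine ⟨1, fun k hk => ?_⟩
  have hk1 : (1 : ℝ) ≤ (k : ℝ) := by exact_mod_cast hk
  have hlogk0 : 0 ≤ Real.log k := Real.log_nonneg hk1
  have hlogk : Real.log k ≤ (k : ℝ) - 1 := Real.log_le_sub_one_of_pos (by linarith)
  have hM0 : 0 ≤ (k : ℝ) - γ * Real.log k := by nlinarith
  set M : ℕ := ⌊(k : ℝ) - γ * Real.log k⌋₊ with hMdef
  have hMle : (M : ℝ) ≤ (k : ℝ) - γ * Real.log k := Nat.floor_le hM0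
  set A : ℕ := (k + 1) / 2 with hAdef
  set B : ℕ := (M + 1) / 2 with hBdef
  have hsub : (Finset.Icc 1 k ×ˢ Finset.Icc 1 k).filter
      (fun nm : ℕ × ℕ => nm.2 ≤ nm.1 ∧ (nm.2 : ℝ) ≤ k - γ * Real.log k)
      ⊆ Finset.Icc 1 k ×ˢ Finset.Icc 1 M := by
    intro nm hnm
    simp only [Finset.mem_filter, Finset.mem_product, Finset.mem_Icc] at hnm ⊢
    obtain ⟨⟨⟨h1, h2⟩, ⟨h3, h4⟩⟩, -, h6⟩ := hnm
    exact ⟨⟨h1, h2⟩, h3, Nat.le_floor h6⟩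
  have factor : ∀ N : ℕ, ∑ n ∈ Finset.Icc 1 N, ((palFinset g n).card : ℝ)
      ≤ 4 * (g : ℝ) ^ ((N + 1) / 2 : ℕ) := by
    intro N
    have h : ∑ n ∈ Finset.Icc 1 N, (palFinset g n).card ≤ 4 * g ^ ((N + 1) / 2) :=
      le_trans (Finset.sum_le_sum fun n _ => card_palFinset_le g hg n) (geomSum_le g hg N)
    exact_mod_cast h
  calc ∑ nm ∈ (Finset.Icc 1 k ×ˢ Finset.Icc 1 k).filter
          (fun nm : ℕ × ℕ => nm.2 ≤ nm.1 ∧ (nm.2 : ℝ) ≤ k - γ * Real.log k),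
          ((palFinset g nm.1).card : ℝ) * ((palFinset g nm.2).card : ℝ)
      ≤ ∑ nm ∈ Finset.Icc 1 k ×ˢ Finset.Icc 1 M,
          ((palFinset g nm.1).card : ℝ) * ((palFinset g nm.2).card : ℝ) :=
        Finset.sum_le_sum_of_subset_of_nonneg hsub (fun i _ _ => by positivity)
    _ = (∑ n ∈ Finset.Icc 1 k, ((palFinset g n).card : ℝ)) *
          (∑ m ∈ Finset.Icc 1 M, ((palFinset g m).card : ℝ)) := by
        rw [Finset.sum_product, Finset.sum_mul_sum]
    _ ≤ (4 * (g : ℝ) ^ A) * (4 * (g : ℝ) ^ B) := by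
        apply mul_le_mul (factor k) (factor M) ?_ (by positivity)
        · exact Finset.sum_nonneg fun i _ => by positivity
    _ = 16 * (g : ℝ) ^ (A + B : ℕ) := by rw [pow_add]; ring
    _ ≤ 16 * (g : ℝ) ^ ((k : ℝ) + 1 - (γ / 2) * Real.log k) := by
        rw [← Real.rpow_natCast (g : ℝ) (A + B)]
        apply mul_le_mul_of_nonneg_left ?_ (by norm_num)
        apply Real.rpow_le_rpow_of_exponent_le hgR.le
        have hA : (A : ℝ) ≤ ((k : ℝ) + 1) / 2 := by
          have h2A : (2 * A : ℕ) ≤ k + 1 := by omega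
          have : ((2 * A : ℕ) : ℝ) ≤ ((k + 1 : ℕ) : ℝ) := by exact_mod_cast h2A
          push_cast at this
          linarith
        have hB : (B : ℝ) ≤ ((k : ℝ) - γ * Real.log k + 1) / 2 := by
          have h2B : (2 * B : ℕ) ≤ M + 1 := by omega
          have h2B' : ((2 * B : ℕ) : ℝ) ≤ ((M + 1 : ℕ) : ℝ) := by exact_mod_cast h2B
          push_cast at h2B'
          linarith
        push_cast
        linarith
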